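/- Let X = (X_1,...,X_p), p ≥ 5, with independent components, and f(X) = (a_1 X_1 + a_2 X_2) 1_{X_5 ≤ 0} + (a_3 X_3 + a_4 X_4) 1_{X_5 > 0}. For any observation x with x_5 ≤ 0, the Shapley value of X_3 equals φ_3 = K · a_3 (x_3 − E[X_3]), where K = (1/p) · P(X_5 > 0) · Σ_{S ⊆ {1,...,p}\{3,5}} C(p−1, |S|)⁻¹ > 0 whenever P(X_5 > 0) > 0. In particular, φ_3 ≠ 0 whenever a_3 ≠ 0, x_3 ≠ E[X_3], and P(X_5 > 0) > 0, even though the prediction f(x) does not depend on x_3. -/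

import Mathlib

open MeasureTheory ProbabilityTheory

attribute [local instance] Classical.propDecidable

/-- The conditioning event: all coordinates in `S` equal the observed values. -/
def Aset {Ω : Type*} {p : ℕ} (X : Fin p → Ω → ℝ) (x : Fin p → ℝ)
    (S : Finset (Fin p)) : Set Ω := {ω | ∀ i ∈ S, X i ω = x i}

/-- Expectation of `X j` times the indicator of an event generated by the
variables with indices in `T`, for `j ∉ T`, factorizes by independence. -/
lemma exp_helper {Ω : Type*} [MeasurableSpace Ω] {μ : Measure Ω} [IsProbabilityMeasure μ]
    {p : ℕ} {X : Fin p → Ω → ℝ} (hXm : ∀ i, Measurable (X i))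
    (hindep : iIndepFun X μ)
    (j : Fin p) (hj : Integrable (X j) μ) (T : Finset (Fin p)) (hjT : j ∉ T)
    (c : Fin p → Set ℝ) (hc : ∀ i, MeasurableSet (c i)) :
    ∫ ω, X j ω * Set.indicator (⋂ i ∈ T, X i ⁻¹' c i) 1 ω ∂μ
      = (∫ ω, X j ω ∂μ) * (μ (⋂ i ∈ T, X i ⁻¹' c i)).toReal := by
  set G := ⋂ i ∈ T, X i ⁻¹' c i with hGdef
  have hG : MeasurableSet G :=
    MeasurableSet.biInter (Finset.countable_toSet T) fun i _ => (hXm i) (hc i)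
  set M : Set (T → ℝ) := ⋂ i : T, (fun v => v i) ⁻¹' c i with hMdef
  have hM : MeasurableSet M :=
    MeasurableSet.iInter fun i => (measurable_pi_apply i) (hc i)
  have hGpre : G = (fun a (i : T) => X (i : Fin p) a) ⁻¹' M := by
    ext ω
    simp [hGdef, hMdef, Set.mem_iInter, Subtype.forall]
  have hdisj : Disjoint ({j} : Finset (Fin p)) T := by
    simp [Finset.disjoint_left, hjT]
  have h1 := hindep.indepFun_finset {j} T hdisj hXm
  have indep : IndepFun (X j) (G.indicator (1 : Ω → ℝ)) μ := by
    have h2 : IndepFun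
        ((fun v : ({j} : Finset (Fin p)) → ℝ => v ⟨j, Finset.mem_singleton_self j⟩) ∘
          (fun a (i : ({j} : Finset (Fin p))) => X (i : Fin p) a))
        ((M.indicator (1 : (T → ℝ) → ℝ)) ∘ (fun a (i : T) => X (i : Fin p) a)) μ := h1.comp
      (measurable_pi_apply _) (measurable_const.indicator hM)
    convert h2 using 1
    · funext ω
      by_cases h : (fun i : T => X (i : Fin p) ω) ∈ M <;>
        simp [Set.indicator_apply, hGpre, Set.mem_preimage, h]
    · funext ω
      by_cases h : (fun i : T => X (i : Fin p) ω) ∈ M <;>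
        simp [Set.indicator_apply, hGpre, Set.mem_preimage, h]
  have hInd : Integrable (G.indicator (1 : Ω → ℝ)) μ := (integrable_const 1).indicator hG
  have := indep.integral_mul_eq_mul_integral hj.aestronglyMeasurable hInd.aestronglyMeasurable
  rw [show (fun ω => X j ω * Set.indicator G 1 ω) = X j * G.indicator 1 from rfl]
  rw [this, integral_indicator_one hG, measureReal_def]

set_option maxHeartbeats 2000000 in
/-- For `f(X) = (a₁X₁+a₂X₂)1_{X₅≤0} + (a₃X₃+a₄X₄)1_{X₅>0}` with independent
components and `x₅ ≤ 0`, the Shapley value of `X₃` equals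
`φ₃ = K·a₃(x₃ − E[X₃])` with
`K = (1/p)·P(X₅>0)·Σ_{S ⊆ [p]\{3,5}} C(p−1,|S|)⁻¹`; `K > 0` whenever
`P(X₅>0) > 0`, so `φ₃ ≠ 0` whenever moreover `a₃ ≠ 0` and `x₃ ≠ E[X₃]`, even
though the prediction does not depend on `x₃`.
(Indices `0,…,4` stand for `X₁,…,X₅`.) -/
theorem shapley_not_local
    {Ω : Type*} [MeasurableSpace Ω] (μ : Measure Ω) [IsProbabilityMeasure μ]
    (p : ℕ) (hp : 5 ≤ p) (X : Fin p → Ω → ℝ) (hXm : ∀ i, Measurable (X i))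
    (hindep : ProbabilityTheory.iIndepFun X μ)
    (hint : ∀ i, Integrable (X i) μ)
    (a₁ a₂ a₃ a₄ : ℝ) (x : Fin p → ℝ)
    (hx5 : x ⟨4, by omega⟩ ≤ 0)
    (hpos : ∀ S : Finset (Fin p), μ {ω | ∀ i ∈ S, X i ω = x i} ≠ 0)
    (F : Ω → ℝ)
    (hF : ∀ ω, F ω = (a₁ * X ⟨0, by omega⟩ ω + a₂ * X ⟨1, by omega⟩ ω) *
          (if X ⟨4, by omega⟩ ω ≤ 0 then (1 : ℝ) else 0) +
        (a₃ * X ⟨2, by omega⟩ ω + a₄ * X ⟨3, by omega⟩ ω) *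
          (if 0 < X ⟨4, by omega⟩ ω then (1 : ℝ) else 0))
    (v : Finset (Fin p) → ℝ)
    (hv : ∀ S, v S = ∫ ω, F ω ∂(ProbabilityTheory.cond μ
      {ω | ∀ i ∈ S, X i ω = x i}))
    (φ₃ : ℝ)
    (hφ₃ : φ₃ = (p : ℝ)⁻¹ *
      ∑ S ∈ (Finset.univ.erase ⟨2, by omega⟩).powerset,
        (((p - 1).choose S.card : ℕ) : ℝ)⁻¹ *
          (v (insert ⟨2, by omega⟩ S) - v S))
    (K : ℝ)
    (hK : K = (p : ℝ)⁻¹ * (μ {ω | 0 < X ⟨4, by omega⟩ ω}).toReal *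
      ∑ S ∈ ((Finset.univ \ {(⟨2, by omega⟩ : Fin p), ⟨4, by omega⟩}) :
          Finset (Fin p)).powerset,
        (((p - 1).choose S.card : ℕ) : ℝ)⁻¹) :
    φ₃ = K * (a₃ * (x ⟨2, by omega⟩ - ∫ ω, X ⟨2, by omega⟩ ω ∂μ)) ∧
      (μ {ω | 0 < X ⟨4, by omega⟩ ω} ≠ 0 → 0 < K) ∧
      (a₃ ≠ 0 → x ⟨2, by omega⟩ ≠ (∫ ω, X ⟨2, by omega⟩ ω ∂μ) →
        μ {ω | 0 < X ⟨4, by omega⟩ ω} ≠ 0 → φ₃ ≠ 0) := by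
  -- anchors (defeq to the ones in the statement by proof irrelevance)
  let i0 : Fin p := ⟨0, by omega⟩
  let i1 : Fin p := ⟨1, by omega⟩
  let i2 : Fin p := ⟨2, by omega⟩
  let i3 : Fin p := ⟨3, by omega⟩
  let i4 : Fin p := ⟨4, by omega⟩
  have h24 : i2 ≠ i4 := fun h => absurd (show (2:ℕ) = 4 from congrArg Fin.val h) (by norm_num)
  have h04 : i0 ≠ i4 := fun h => absurd (show (0:ℕ) = 4 from congrArg Fin.val h) (by norm_num)
  have h14 : i1 ≠ i4 := fun h => absurd (show (1:ℕ) = 4 from congrArg Fin.val h) (by norm_num)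
  have h34 : i3 ≠ i4 := fun h => absurd (show (3:ℕ) = 4 from congrArg Fin.val h) (by norm_num)
  have h02 : i0 ≠ i2 := fun h => absurd (show (0:ℕ) = 2 from congrArg Fin.val h) (by norm_num)
  have h12 : i1 ≠ i2 := fun h => absurd (show (1:ℕ) = 2 from congrArg Fin.val h) (by norm_num)
  have h32 : i3 ≠ i2 := fun h => absurd (show (3:ℕ) = 2 from congrArg Fin.val h) (by norm_num)
  -- restate hypotheses with our anchors
  have hx5' : x i4 ≤ 0 := hx5
  have hpos' : ∀ S, μ (Aset X x S) ≠ 0 := hpos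
  have hF' : ∀ ω, F ω = (a₁ * X i0 ω + a₂ * X i1 ω) *
        (if X i4 ω ≤ 0 then (1 : ℝ) else 0) +
      (a₃ * X i2 ω + a₄ * X i3 ω) * (if 0 < X i4 ω then (1 : ℝ) else 0) := hF
  have hv' : ∀ S, v S = ∫ ω, F ω ∂(ProbabilityTheory.cond μ (Aset X x S)) := hv
  have hφ₃' : φ₃ = (p : ℝ)⁻¹ *
      ∑ S ∈ (Finset.univ.erase i2).powerset,
        (((p - 1).choose S.card : ℕ) : ℝ)⁻¹ * (v (insert i2 S) - v S) := hφ₃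
  have hK' : K = (p : ℝ)⁻¹ * (μ (X i4 ⁻¹' Set.Ioi 0)).toReal *
      ∑ S ∈ ((Finset.univ \ {i2, i4}) : Finset (Fin p)).powerset,
        (((p - 1).choose S.card : ℕ) : ℝ)⁻¹ := hK
  -- basic facts
  have hA_eq : ∀ S, Aset X x S = ⋂ i ∈ S, X i ⁻¹' {x i} := by
    intro S; ext ω; simp [Aset]
  have hA_meas : ∀ S, MeasurableSet (Aset X x S) := by
    intro S
    rw [hA_eq]
    exact MeasurableSet.biInter (Finset.countable_toSet S)
      fun i _ => (hXm i) (measurableSet_singleton _)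
  have hα_pos : ∀ S, 0 < (μ (Aset X x S)).toReal :=
    fun S => ENNReal.toReal_pos (hpos' S) (measure_ne_top μ _)
  -- mass factorizations
  have massA : ∀ S, μ (Aset X x S) = ∏ i ∈ S, μ (X i ⁻¹' {x i}) := by
    intro S
    rw [hA_eq]
    exact hindep.measure_inter_preimage_eq_mul S (fun i _ => measurableSet_singleton _)
  have massE : ∀ S : Finset (Fin p), i4 ∉ S → ∀ e : Set ℝ, MeasurableSet e →
      μ (X i4 ⁻¹' e ∩ Aset X x S) = μ (X i4 ⁻¹' e) * μ (Aset X x S) := by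
    intro S h4 e he
    have h1 : X i4 ⁻¹' e ∩ Aset X x S
        = ⋂ i ∈ insert i4 S, X i ⁻¹' (if i = i4 then e else {x i}) := by
      rw [hA_eq, Finset.set_biInter_insert, if_pos rfl]
      congr 1
      exact Set.iInter₂_congr fun i hi => by
        rw [if_neg (by rintro rfl; exact h4 hi)]
    rw [h1, hindep.measure_inter_preimage_eq_mul _
      (fun i _ => by split <;> [exact he; exact measurableSet_singleton _]),
      Finset.prod_insert h4, if_pos rfl, massA]
    congr 1
    exact Finset.prod_congr rfl fun i hi => by rw [if_neg (by rintro rfl; exact h4 hi)]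
  -- degenerate cases (i4 ∈ S)
  have hE1_empty : ∀ S : Finset (Fin p), i4 ∈ S →
      X i4 ⁻¹' Set.Ioi 0 ∩ Aset X x S = ∅ := by
    intro S h4
    ext ω
    simp only [Set.mem_inter_iff, Set.mem_preimage, Set.mem_Ioi, Set.mem_empty_iff_false,
      iff_false, not_and, Aset, Set.mem_setOf_eq]
    intro hlt hall
    have := hall i4 h4
    rw [this] at hlt
    exact absurd hx5' (not_le.2 hlt)
  have hE0_full : ∀ S : Finset (Fin p), i4 ∈ S →
      X i4 ⁻¹' Set.Iic 0 ∩ Aset X x S = Aset X x S := by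
    intro S h4
    apply Set.inter_eq_right.2
    intro ω hω
    simp only [Set.mem_preimage, Set.mem_Iic]
    rw [hω i4 h4]
    exact hx5'
  -- integrability of pieces
  have hIpiece : ∀ (j : Fin p) (G : Set Ω), MeasurableSet G →
      Integrable (fun ω => X j ω * G.indicator 1 ω) μ := by
    intro j G hG
    have h := Integrable.bdd_mul (f := G.indicator (1 : Ω → ℝ)) (c := 1) (hint j)
      ((aestronglyMeasurable_indicator_iff hG).2 aestronglyMeasurable_const)
      (ae_of_all _ fun ω => by by_cases h : ω ∈ G <;> simp [Set.indicator_apply, h, Pi.one_apply])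
    have : (fun ω => X j ω * G.indicator 1 ω) = fun ω => G.indicator 1 ω * X j ω := by
      funext ω; ring
    rw [this]; exact h
  -- key expectation identity
  have hJ : ∀ (S : Finset (Fin p)) (j : Fin p), j ≠ i4 → ∀ e : Set ℝ, MeasurableSet e →
      ∫ ω, X j ω * (X i4 ⁻¹' e ∩ Aset X x S).indicator 1 ω ∂μ
        = (if j ∈ S then x j else ∫ ω, X j ω ∂μ) *
            (μ (X i4 ⁻¹' e ∩ Aset X x S)).toReal := by
    intro S j hj4 e he
    have hG : MeasurableSet (X i4 ⁻¹' e ∩ Aset X x S) := ((hXm i4) he).inter (hA_meas S)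
    by_cases hjS : j ∈ S
    · rw [if_pos hjS]
      have hpt : (fun ω => X j ω * (X i4 ⁻¹' e ∩ Aset X x S).indicator 1 ω)
          = fun ω => x j * (X i4 ⁻¹' e ∩ Aset X x S).indicator 1 ω := by
        funext ω
        by_cases h : ω ∈ X i4 ⁻¹' e ∩ Aset X x S
        · have := h.2 j hjS
          simp [Set.indicator_of_mem h, this]
        · simp [Set.indicator_of_notMem h]
      rw [hpt, integral_const_mul, integral_indicator_one hG, measureReal_def]
    · rw [if_neg hjS]
      have hset : X i4 ⁻¹' e ∩ Aset X x S = ⋂ i ∈ insert i4 S, X i ⁻¹'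
          ((if i = i4 then e else Set.univ) ∩ (if i ∈ S then {x i} else Set.univ)) := by
        ext ω
        simp only [Set.mem_iInter, Set.mem_preimage, Set.mem_inter_iff, Finset.mem_insert,
          Aset, Set.mem_setOf_eq]
        constructor
        · rintro ⟨h4, hS⟩ i hi
          constructor
          · split
            · next hh => rw [hh]; exact h4
            · trivial
          · split
            · next hh => exact hS i hh
            · trivial
        · intro h
          refine ⟨?_, fun i hi => ?_⟩
          · have := (h i4 (Or.inl rfl)).1
            rwa [if_pos rfl] at this
          · have := (h i (Or.inr hi)).2
            rwa [if_pos hi] at this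
      rw [hset]
      exact exp_helper hXm hindep j (hint j) (insert i4 S)
        (by simp [Finset.mem_insert, hj4, hjS])
        _ (fun i => by
          apply MeasurableSet.inter <;> split <;>
            first
              | exact he
              | exact MeasurableSet.univ
              | exact measurableSet_singleton _)
  -- the value formula
  have hvS : ∀ S : Finset (Fin p),
      v S = (μ (Aset X x S)).toReal⁻¹ *
        ((a₁ * (if i0 ∈ S then x i0 else ∫ ω, X i0 ω ∂μ)
            + a₂ * (if i1 ∈ S then x i1 else ∫ ω, X i1 ω ∂μ)) *
              (μ (X i4 ⁻¹' Set.Iic 0 ∩ Aset X x S)).toReal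
          + (a₃ * (if i2 ∈ S then x i2 else ∫ ω, X i2 ω ∂μ)
            + a₄ * (if i3 ∈ S then x i3 else ∫ ω, X i3 ω ∂μ)) *
              (μ (X i4 ⁻¹' Set.Ioi 0 ∩ Aset X x S)).toReal) := by
    intro S
    rw [hv' S]
    have hcond : ProbabilityTheory.cond μ (Aset X x S)
        = (μ (Aset X x S))⁻¹ • μ.restrict (Aset X x S) := rfl
    rw [hcond, integral_smul_measure, ← integral_indicator (hA_meas S)]
    have hpt : (fun ω => (Aset X x S).indicator F ω)
        = fun ω => a₁ * (X i0 ω * (X i4 ⁻¹' Set.Iic 0 ∩ Aset X x S).indicator 1 ω)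
          + a₂ * (X i1 ω * (X i4 ⁻¹' Set.Iic 0 ∩ Aset X x S).indicator 1 ω)
          + a₃ * (X i2 ω * (X i4 ⁻¹' Set.Ioi 0 ∩ Aset X x S).indicator 1 ω)
          + a₄ * (X i3 ω * (X i4 ⁻¹' Set.Ioi 0 ∩ Aset X x S).indicator 1 ω) := by
      funext ω
      have hFind : (Aset X x S).indicator F ω = F ω * (Aset X x S).indicator 1 ω := by
        by_cases h : ω ∈ Aset X x S <;> simp [Set.indicator_apply, h]
      rw [hFind, hF' ω]
      by_cases hAω : ω ∈ Aset X x S <;> by_cases h4 : X i4 ω ≤ 0 <;>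
        simp [Set.indicator_apply, hAω, h4, Set.mem_Iic, Set.mem_Ioi, lt_iff_not_ge] <;>
        ring
    have hG0 : MeasurableSet (X i4 ⁻¹' Set.Iic 0 ∩ Aset X x S) :=
      ((hXm i4) measurableSet_Iic).inter (hA_meas S)
    have hG1 : MeasurableSet (X i4 ⁻¹' Set.Ioi 0 ∩ Aset X x S) :=
      ((hXm i4) measurableSet_Ioi).inter (hA_meas S)
    have hi0' := hIpiece i0 _ hG0
    have hi1' := hIpiece i1 _ hG0
    have hi2' := hIpiece i2 _ hG1
    have hi3' := hIpiece i3 _ hG1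
    have hT0 : Integrable (fun ω =>
        a₁ * (X i0 ω * (X i4 ⁻¹' Set.Iic 0 ∩ Aset X x S).indicator 1 ω)) μ :=
      hi0'.const_mul a₁
    have hT1 : Integrable (fun ω =>
        a₂ * (X i1 ω * (X i4 ⁻¹' Set.Iic 0 ∩ Aset X x S).indicator 1 ω)) μ :=
      hi1'.const_mul a₂
    have hT2 : Integrable (fun ω =>
        a₃ * (X i2 ω * (X i4 ⁻¹' Set.Ioi 0 ∩ Aset X x S).indicator 1 ω)) μ :=
      hi2'.const_mul a₃
    have hT3 : Integrable (fun ω =>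
        a₄ * (X i3 ω * (X i4 ⁻¹' Set.Ioi 0 ∩ Aset X x S).indicator 1 ω)) μ :=
      hi3'.const_mul a₄
    have hT01 : Integrable (fun ω =>
        a₁ * (X i0 ω * (X i4 ⁻¹' Set.Iic 0 ∩ Aset X x S).indicator 1 ω)
          + a₂ * (X i1 ω * (X i4 ⁻¹' Set.Iic 0 ∩ Aset X x S).indicator 1 ω)) μ :=
      hT0.add hT1
    have hT012 : Integrable (fun ω =>
        a₁ * (X i0 ω * (X i4 ⁻¹' Set.Iic 0 ∩ Aset X x S).indicator 1 ω)
          + a₂ * (X i1 ω * (X i4 ⁻¹' Set.Iic 0 ∩ Aset X x S).indicator 1 ω)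
          + a₃ * (X i2 ω * (X i4 ⁻¹' Set.Ioi 0 ∩ Aset X x S).indicator 1 ω)) μ :=
      hT01.add hT2
    rw [hpt, integral_add hT012 hT3, integral_add hT01 hT2, integral_add hT0 hT1,
      integral_const_mul, integral_const_mul, integral_const_mul, integral_const_mul,
      hJ S i0 h04 _ measurableSet_Iic, hJ S i1 h14 _ measurableSet_Iic,
      hJ S i2 h24 _ measurableSet_Ioi, hJ S i3 h34 _ measurableSet_Ioi,
      smul_eq_mul, ENNReal.toReal_inv]
    ring
  -- positivity of the singleton mass
  have hb_ne : μ (X i2 ⁻¹' {x i2}) ≠ 0 := by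
    have h : Aset X x {i2} = X i2 ⁻¹' {x i2} := by ext ω; simp [Aset]
    rw [← h]; exact hpos' {i2}
  have hbr_pos : 0 < (μ (X i2 ⁻¹' {x i2})).toReal :=
    ENNReal.toReal_pos hb_ne (measure_ne_top μ _)
  -- inserting i2 multiplies the masses by the singleton mass
  have hins_m : ∀ S : Finset (Fin p), i2 ∉ S →
      μ (Aset X x (insert i2 S)) = μ (X i2 ⁻¹' {x i2}) * μ (Aset X x S) := by
    intro S h2S
    rw [massA, massA, Finset.prod_insert h2S]
  have key0 : ∀ S : Finset (Fin p), i2 ∉ S →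
      μ (X i4 ⁻¹' Set.Iic 0 ∩ Aset X x (insert i2 S))
        = μ (X i2 ⁻¹' {x i2}) * μ (X i4 ⁻¹' Set.Iic 0 ∩ Aset X x S) := by
    intro S h2S
    by_cases h4 : i4 ∈ S
    · rw [hE0_full S h4, hE0_full _ (Finset.mem_insert_of_mem h4), hins_m S h2S]
    · have h4' : i4 ∉ insert i2 S := by
        simp only [Finset.mem_insert, not_or]
        exact ⟨fun h => h24 h.symm, h4⟩
      rw [massE _ h4' _ measurableSet_Iic, massE _ h4 _ measurableSet_Iic, hins_m S h2S]
      ring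
  have key1 : ∀ S : Finset (Fin p), i2 ∉ S →
      μ (X i4 ⁻¹' Set.Ioi 0 ∩ Aset X x (insert i2 S))
        = μ (X i2 ⁻¹' {x i2}) * μ (X i4 ⁻¹' Set.Ioi 0 ∩ Aset X x S) := by
    intro S h2S
    by_cases h4 : i4 ∈ S
    · rw [hE1_empty S h4, hE1_empty _ (Finset.mem_insert_of_mem h4)]
      simp
    · have h4' : i4 ∉ insert i2 S := by
        simp only [Finset.mem_insert, not_or]
        exact ⟨fun h => h24 h.symm, h4⟩
      rw [massE _ h4' _ measurableSet_Ioi, massE _ h4 _ measurableSet_Ioi, hins_m S h2S]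
      ring
  -- the marginal contribution
  have hdiff : ∀ S : Finset (Fin p), i2 ∉ S →
      v (insert i2 S) - v S
        = (if i4 ∈ S then 0 else (μ (X i4 ⁻¹' Set.Ioi 0)).toReal) *
            (a₃ * (x i2 - ∫ ω, X i2 ω ∂μ)) := by
    intro S h2S
    rw [hvS (insert i2 S), hvS S, hins_m S h2S, key0 S h2S, key1 S h2S,
      ENNReal.toReal_mul, ENNReal.toReal_mul, ENNReal.toReal_mul]
    simp only [Finset.mem_insert, h02, h12, h32, h2S, false_or, or_false, if_false,
      eq_self_iff_true, true_or, if_true]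
    set ar := (μ (Aset X x S)).toReal with har
    set br := (μ (X i2 ⁻¹' {x i2})).toReal with hbr
    set w0 := (μ (X i4 ⁻¹' Set.Iic 0 ∩ Aset X x S)).toReal with hw0
    set w1 := (μ (X i4 ⁻¹' Set.Ioi 0 ∩ Aset X x S)).toReal with hw1
    have har_ne : ar ≠ 0 := ne_of_gt (hα_pos S)
    have hbr_ne : br ≠ 0 := ne_of_gt hbr_pos
    by_cases h4 : i4 ∈ S
    · rw [if_pos h4]
      have hw1z : w1 = 0 := by rw [hw1, hE1_empty S h4]; simp
      rw [hw1z]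
      field_simp
      ring
    · rw [if_neg h4]
      have hw1v : w1 = (μ (X i4 ⁻¹' Set.Ioi 0)).toReal * ar := by
        rw [hw1, massE S h4 _ measurableSet_Ioi, ENNReal.toReal_mul, har]
      rw [hw1v]
      field_simp
      ring
  -- summing up
  have hsub : ((Finset.univ \ {i2, i4}) : Finset (Fin p)).powerset
      ⊆ (Finset.univ.erase i2).powerset := by
    apply Finset.powerset_mono.2
    intro i hi
    rw [Finset.mem_sdiff] at hi
    rw [Finset.mem_erase]
    refine ⟨fun h => hi.2 (by simp [h]), Finset.mem_univ i⟩
  have hvan : ∀ S ∈ (Finset.univ.erase i2).powerset,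
      S ∉ ((Finset.univ \ {i2, i4}) : Finset (Fin p)).powerset →
      (((p - 1).choose S.card : ℕ) : ℝ)⁻¹ * (v (insert i2 S) - v S) = 0 := by
    intro S hS hS'
    have h2S : i2 ∉ S := fun h =>
      (Finset.mem_erase.1 (Finset.mem_powerset.1 hS h)).1 rfl
    have h4S : i4 ∈ S := by
      by_contra h4
      apply hS'
      rw [Finset.mem_powerset]
      intro i hiS
      rw [Finset.mem_sdiff]
      refine ⟨Finset.mem_univ _, fun hmem => ?_⟩
      rcases Finset.mem_insert.1 hmem with h | h
      · exact h2S (h ▸ hiS)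
      · rw [Finset.mem_singleton] at h
        exact h4 (h ▸ hiS)
    rw [hdiff S h2S, if_pos h4S]
    ring
  have hsum : (∑ S ∈ (Finset.univ.erase i2).powerset,
        (((p - 1).choose S.card : ℕ) : ℝ)⁻¹ * (v (insert i2 S) - v S))
      = (∑ S ∈ ((Finset.univ \ {i2, i4}) : Finset (Fin p)).powerset,
          (((p - 1).choose S.card : ℕ) : ℝ)⁻¹) *
        ((μ (X i4 ⁻¹' Set.Ioi 0)).toReal * (a₃ * (x i2 - ∫ ω, X i2 ω ∂μ))) := by
    rw [← Finset.sum_subset hsub hvan, Finset.sum_mul]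
    apply Finset.sum_congr rfl
    intro S hS
    have hSsub := Finset.mem_powerset.1 hS
    have h2S : i2 ∉ S := fun h => by
      have := hSsub h
      rw [Finset.mem_sdiff] at this
      exact this.2 (by simp)
    have h4S : i4 ∉ S := fun h => by
      have := hSsub h
      rw [Finset.mem_sdiff] at this
      exact this.2 (by simp)
    rw [hdiff S h2S, if_neg h4S]
  -- conclusion
  have main : φ₃ = K * (a₃ * (x i2 - ∫ ω, X i2 ω ∂μ)) := by
    rw [hφ₃', hsum, hK']
    ring
  have hKpos : μ (X i4 ⁻¹' Set.Ioi 0) ≠ 0 → 0 < K := by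
    intro hne
    rw [hK']
    have h1 : 0 < (p : ℝ)⁻¹ := by
      apply inv_pos.2
      exact_mod_cast (show 0 < p by omega)
    have h2 : 0 < (μ (X i4 ⁻¹' Set.Ioi 0)).toReal :=
      ENNReal.toReal_pos hne (measure_ne_top μ _)
    have h3 : 0 < ∑ S ∈ ((Finset.univ \ {i2, i4}) : Finset (Fin p)).powerset,
        (((p - 1).choose S.card : ℕ) : ℝ)⁻¹ := by
      apply Finset.sum_pos
      · intro S hS
        apply inv_pos.2
        apply Nat.cast_pos.2
        apply Nat.choose_pos
        have hle : S.card ≤ (Finset.univ \ {i2, i4} : Finset (Fin p)).card :=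
          Finset.card_le_card (Finset.mem_powerset.1 hS)
        have hcard : (Finset.univ \ {i2, i4} : Finset (Fin p)).card = p - 2 := by
          rw [Finset.card_sdiff_of_subset (Finset.subset_univ _), Finset.card_univ, Fintype.card_fin,
            Finset.card_pair h24]
        omega
      · exact ⟨∅, Finset.empty_mem_powerset _⟩
    exact mul_pos (mul_pos h1 h2) h3
  refine ⟨main, hKpos, fun ha hx hne => ?_⟩
  rw [main]
  exact mul_ne_zero (ne_of_gt (hKpos hne)) (mul_ne_zero ha (sub_ne_zero.2 hx))
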